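/- Let G be a finite group, H ≤ G, and let S be a simple real G-module with G-invariant inner product, character σ, such that the fixed space W = Fix_S(H) is one-dimensional over 𝔻 = End_{ℝG}(S). Then for any w ∈ W with ⟨w,w⟩ = 1 and any g ∈ G: ⟨w·g, w⟩ = σ(e_H·g)/⟨σ,σ⟩ = (1/(|H|·⟨σ,σ⟩))·Σ_{h∈H} σ(hg). -/

import Mathlib

open scoped InnerProductSpace

namespace Stmt14Aux

variable {S : Type} [NormedAddCommGroup S] [InnerProductSpace ℝ S] [FiniteDimensional ℝ S]

lemma trace_eq_sum_inner' {ι : Type} [Fintype ι] [DecidableEq ι] (b : OrthonormalBasis ι ℝ S)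
    (f : S →ₗ[ℝ] S) :
    LinearMap.trace ℝ S f = ∑ i, ⟪f (b i), b i⟫_ℝ := by
  rw [LinearMap.trace_eq_matrix_trace ℝ b.toBasis, Matrix.trace]
  refine Finset.sum_congr rfl fun i _ => ?_
  rw [Matrix.diag_apply, LinearMap.toMatrix_apply, b.coe_toBasis,
    b.coe_toBasis_repr_apply, b.repr_apply_apply, real_inner_comm]

/-- Conjugation-type operator on endomorphisms. -/
def conjMap (A B : S →ₗ[ℝ] S) : (S →ₗ[ℝ] S) →ₗ[ℝ] (S →ₗ[ℝ] S) where
  toFun f := A ∘ₗ f ∘ₗ B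
  map_add' f g := by ext x; simp
  map_smul' c f := by ext x; simp

lemma trace_conjMap (A B : S →ₗ[ℝ] S) :
    LinearMap.trace ℝ (S →ₗ[ℝ] S) (conjMap A B)
      = LinearMap.trace ℝ S A * LinearMap.trace ℝ S B := by
  let e := dualTensorHomEquiv ℝ S S
  have key : conjMap A B
      = e.conj (TensorProduct.map (Module.Dual.transpose (R := ℝ) B) A) := by
    apply LinearMap.ext; intro f
    obtain ⟨t, rfl⟩ := e.surjective f
    rw [LinearEquiv.conj_apply, LinearMap.comp_apply, LinearMap.comp_apply]
    erw [e.symm_apply_apply]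
    induction t using TensorProduct.induction_on with
    | zero => simp
    | tmul φ m =>
        ext x
        simp [e, conjMap, Module.Dual.transpose_apply]
    | add s t hs ht => simp only [map_add, hs, ht]
  rw [key]
  have h1 := LinearMap.trace_conj' (R := ℝ) (M := TensorProduct ℝ (Module.Dual ℝ S) S)
    (N := S →ₗ[ℝ] S) (TensorProduct.map (Module.Dual.transpose (R := ℝ) B) A) e
  rw [h1, LinearMap.trace_tensorProduct', LinearMap.trace_transpose', mul_comm]


lemma schur_scalar {G : Type} [Group G] (ρ : Representation ℝ G S)
    (hnt : Nontrivial S)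
    (hsimple : ∀ W : Submodule ℝ S, (∀ g, ∀ x ∈ W, ρ g x ∈ W) → W = ⊥ ∨ W = ⊤)
    (T : S →ₗ[ℝ] S) (hcomm : ∀ g, T ∘ₗ ρ g = ρ g ∘ₗ T)
    (hsym : ∀ u v : S, ⟪T u, v⟫_ℝ = ⟪u, T v⟫_ℝ) :
    ∃ c : ℝ, ∀ u : S, T u = c • u := by
  haveI := hnt
  have hT : T.IsSymmetric := fun u v => hsym u v
  obtain ⟨μ, hμ⟩ : ∃ μ, Module.End.HasEigenvalue T μ :=
    ⟨_, hT.hasEigenvalue_iSup_of_finiteDimensional⟩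
  refine ⟨μ, ?_⟩
  have hinv : ∀ g, ∀ x ∈ Module.End.eigenspace T μ, ρ g x ∈ Module.End.eigenspace T μ := by
    intro g x hx
    rw [Module.End.mem_eigenspace_iff] at hx ⊢
    have hx2 := LinearMap.congr_fun (hcomm g) x
    simp only [LinearMap.comp_apply] at hx2
    rw [hx2, hx, map_smul]
  rcases hsimple _ hinv with hbot | htop
  · exact absurd hbot (Module.End.hasEigenvalue_iff.mp hμ)
  · intro u
    have hu : u ∈ Module.End.eigenspace T μ := htop ▸ Submodule.mem_top
    exact Module.End.mem_eigenspace_iff.mp hu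

end Stmt14Aux

open Stmt14Aux in
/-- (Corollary `c:cosine_spherical`.) If the Wythoff space
`W = Fix_S(H)` of a simple real `G`-module `S` is one-dimensional over
`𝔻 = End_{ℝG}(S)`, then for any `w ∈ W` with `⟨w,w⟩ = 1` and any `g ∈ G`:
`⟨w·g, w⟩ = σ(e_H·g)/⟨σ,σ⟩ = (1/(|H|·⟨σ,σ⟩))·Σ_{h∈H} σ(hg)`. -/
theorem stmt14 {G : Type} [Group G] [Finite G] (H : Subgroup G)
    {S : Type} [NormedAddCommGroup S] [InnerProductSpace ℝ S] [FiniteDimensional ℝ S]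
    (ρ : Representation ℝ G S)
    (horth : ∀ g (u v : S), ⟪ρ g u, ρ g v⟫_ℝ = ⟪u, v⟫_ℝ)
    (hnt : Nontrivial S)
    (hsimple : ∀ W : Submodule ℝ S, (∀ g, ∀ x ∈ W, ρ g x ∈ W) → W = ⊥ ∨ W = ⊤)
    (w : S) (hwfix : ∀ h ∈ H, ρ h w = w) (hnorm : ⟪w, w⟫_ℝ = 1)
    -- `W = Fix_S(H)` is one-dimensional over `𝔻`, spanned by `w`:
    (hspan : ∀ v : S, (∀ h ∈ H, ρ h v = v) →
      ∃ d : S →ₗ[ℝ] S, (∀ g, d ∘ₗ ρ g = ρ g ∘ₗ d) ∧ v = d w) :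
    ∀ g : G,
      ⟪ρ g w, w⟫_ℝ
        = ((Nat.card H : ℝ)⁻¹ * ∑ᶠ h : H, LinearMap.trace ℝ S (ρ ((h : G) * g)))
          / ((Nat.card G : ℝ)⁻¹ * ∑ᶠ x : G,
              LinearMap.trace ℝ S (ρ x) * LinearMap.trace ℝ S (ρ x)) := by
  intro g
  classical
  letI : Fintype G := Fintype.ofFinite G
  letI : Fintype ↥H := Fintype.ofFinite _
  have hρmul : ∀ (x y : G) (u : S), ρ (x * y) u = ρ x (ρ y u) := by
    intro x y u; rw [map_mul]; rfl
  have hρinv : ∀ (x : G) (u : S), ρ x (ρ x⁻¹ u) = u := by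
    intro x u; rw [← hρmul, mul_inv_cancel, map_one]; rfl
  have hadj : ∀ x : G, LinearMap.adjoint (ρ x) = ρ x⁻¹ := by
    intro x
    symm
    rw [LinearMap.eq_adjoint_iff]
    intro u v
    calc ⟪ρ x⁻¹ u, v⟫_ℝ = ⟪ρ x (ρ x⁻¹ u), ρ x v⟫_ℝ := (horth x _ _).symm
      _ = ⟪u, ρ x v⟫_ℝ := by rw [hρinv]
  have hw0 : w ≠ 0 := by
    intro h; rw [h, inner_zero_left] at hnorm; norm_num at hnorm
  -- the fixed subspace
  let Fx : Submodule ℝ S :=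
    { carrier := {v | ∀ h ∈ H, ρ h v = v}
      add_mem' := fun {a b} ha hb h hh => by rw [map_add, ha h hh, hb h hh]
      zero_mem' := fun h hh => map_zero _
      smul_mem' := fun c a ha h hh => by rw [map_smul, ha h hh] }
  have hmemFx : ∀ v : S, v ∈ Fx ↔ ∀ h ∈ H, ρ h v = v := fun v => Iff.rfl
  have hwFx : w ∈ Fx := hwfix
  set m := Module.finrank ℝ ↥Fx with hm
  let v' := stdOrthonormalBasis ℝ ↥Fx
  let v : Fin m → S := fun i => (v' i : S)
  have hvFx : ∀ i, v i ∈ Fx := fun i => (v' i).2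
  have hvon : ∀ i j, ⟪v i, v j⟫_ℝ = if i = j then 1 else 0 := by
    intro i j
    have h1 := v'.orthonormal
    rw [orthonormal_iff_ite] at h1
    exact h1 i j
  -- key step: matrix coefficients at basis vectors of Fx all agree
  have hkey : ∀ i, ⟪ρ g (v i), v i⟫_ℝ = ⟪ρ g w, w⟫_ℝ := by
    intro i
    obtain ⟨d, hd, hdw⟩ := hspan (v i) (hvFx i)
    have hdcomm : ∀ x (u : S), d (ρ x u) = ρ x (d u) := by
      intro x u
      have h1 := LinearMap.congr_fun (hd x) u
      simpa using h1
    set d' := LinearMap.adjoint d with hd'def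
    have hd'comm : ∀ x, d' ∘ₗ ρ x = ρ x ∘ₗ d' := by
      intro x
      have h1 : d ∘ₗ ρ x⁻¹ = ρ x⁻¹ ∘ₗ d := hd x⁻¹
      have h2 := congrArg LinearMap.adjoint h1
      rw [LinearMap.adjoint_comp, LinearMap.adjoint_comp, hadj x⁻¹, inv_inv] at h2
      exact h2.symm
    set T := d' ∘ₗ d with hTdef
    have hTcomm : ∀ x, T ∘ₗ ρ x = ρ x ∘ₗ T := by
      intro x
      rw [hTdef, LinearMap.comp_assoc, hd x, ← LinearMap.comp_assoc, hd'comm x,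
        LinearMap.comp_assoc]
    have hTsym : ∀ a b : S, ⟪T a, b⟫_ℝ = ⟪a, T b⟫_ℝ := by
      intro a b
      rw [hTdef]
      simp only [LinearMap.comp_apply, hd'def]
      rw [LinearMap.adjoint_inner_left, LinearMap.adjoint_inner_right]
    obtain ⟨c, hc⟩ := Stmt14Aux.schur_scalar ρ hnt hsimple T hTcomm hTsym
    have hdd : ∀ a b : S, ⟪d a, d b⟫_ℝ = c * ⟪a, b⟫_ℝ := by
      intro a b
      have h1 : ⟪a, T b⟫_ℝ = ⟪d a, d b⟫_ℝ := by
        rw [hTdef]; simp only [LinearMap.comp_apply, hd'def]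
        rw [LinearMap.adjoint_inner_right]
      rw [← h1, hc b, real_inner_smul_right]
    have hc1 : c = 1 := by
      have h1 : ⟪d w, d w⟫_ℝ = c * ⟪w, w⟫_ℝ := hdd w w
      rw [← hdw, hnorm, mul_one] at h1
      have h2 : ⟪v i, v i⟫_ℝ = 1 := by simpa using hvon i i
      rw [← h1, h2]
    have hgd : ρ g (v i) = d (ρ g w) := by rw [hdw, hdcomm]
    rw [hgd, hdw, hdd, hc1, one_mul]
  -- the averaging projection onto Fx
  have hHcard : (0:ℝ) < (Nat.card ↥H : ℝ) := by exact_mod_cast Nat.card_pos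
  set P : S →ₗ[ℝ] S := (Nat.card ↥H : ℝ)⁻¹ • ∑ h : ↥H, ρ (h : G) with hPdef
  have hPapply : ∀ u, P u = (Nat.card ↥H : ℝ)⁻¹ • ∑ h : ↥H, ρ (h : G) u := by
    intro u
    rw [hPdef]
    simp [LinearMap.sum_apply]
  have hsumfix : ∀ h' ∈ H, ∀ u : S,
      ρ h' (∑ h : ↥H, ρ (h : G) u) = ∑ h : ↥H, ρ (h : G) u := by
    intro h' hh' u
    rw [map_sum]
    refine Fintype.sum_equiv (Equiv.mulLeft (⟨h', hh'⟩ : ↥H)) _ _ ?_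
    intro h
    rw [Equiv.coe_mulLeft, Subgroup.coe_mul, hρmul]
  have hPFx : ∀ u, P u ∈ Fx := by
    intro u
    rw [hmemFx]
    intro h' hh'
    rw [hPapply, map_smul, hsumfix h' hh', ← hPapply]
  have hPinner : ∀ u z, z ∈ Fx → ⟪P u, z⟫_ℝ = ⟪u, z⟫_ℝ := by
    intro u z hz
    rw [hPapply, real_inner_smul_left, sum_inner]
    have h1 : ∀ h : ↥H, ⟪ρ (h : G) u, z⟫_ℝ = ⟪u, z⟫_ℝ := by
      intro h
      conv_lhs => rw [← ((hmemFx z).mp hz) h h.2]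
      rw [horth]
    rw [Finset.sum_congr rfl (fun h _ => h1 h), Finset.sum_const, Finset.card_univ,
      ← Nat.card_eq_fintype_card, nsmul_eq_mul]
    field_simp
  have hexpFx : ∀ z, z ∈ Fx → z = ∑ k, ⟪v k, z⟫_ℝ • v k := by
    intro z hz
    have h1 := v'.sum_repr' ⟨z, hz⟩
    have h2 := congrArg (Submodule.subtype Fx) h1
    simp only [map_sum, map_smul, Submodule.subtype_apply] at h2
    conv_lhs => rw [← h2]
    exact Finset.sum_congr rfl fun k _ => rfl
  have hPformula : ∀ u, P u = ∑ i, ⟪u, v i⟫_ℝ • v i := by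
    intro u
    have hQFx : (∑ i, ⟪u, v i⟫_ℝ • v i) ∈ Fx :=
      Submodule.sum_mem _ (fun i _ => Submodule.smul_mem _ _ (hvFx i))
    have hQvk : ∀ k, ⟪∑ i, ⟪u, v i⟫_ℝ • v i, v k⟫_ℝ = ⟪u, v k⟫_ℝ := by
      intro k
      rw [sum_inner]
      have h1 : ∀ i, ⟪⟪u, v i⟫_ℝ • v i, v k⟫_ℝ = ⟪u, v i⟫_ℝ * (if i = k then 1 else 0) := by
        intro i
        rw [real_inner_smul_left, hvon]
      rw [Finset.sum_congr rfl (fun i _ => h1 i)]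
      simp
    have hQinner : ∀ z, z ∈ Fx → ⟪∑ i, ⟪u, v i⟫_ℝ • v i, z⟫_ℝ = ⟪u, z⟫_ℝ := by
      intro z hz
      conv_lhs => rw [hexpFx z hz]
      conv_rhs => rw [hexpFx z hz]
      rw [inner_sum, inner_sum]
      refine Finset.sum_congr rfl fun k _ => ?_
      rw [real_inner_smul_right, real_inner_smul_right, hQvk]
    have hsub : P u - ∑ i, ⟪u, v i⟫_ℝ • v i ∈ Fx := Submodule.sub_mem _ (hPFx u) hQFx
    have ht : ⟪P u - ∑ i, ⟪u, v i⟫_ℝ • v i, P u - ∑ i, ⟪u, v i⟫_ℝ • v i⟫_ℝ = 0 := by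
      rw [inner_sub_left, hPinner _ _ hsub, hQinner _ hsub, sub_self]
    exact sub_eq_zero.mp (inner_self_eq_zero.mp ht)
  -- trace of P ∘ ρ g
  let b := stdOrthonormalBasis ℝ S
  have htrP : LinearMap.trace ℝ S (P ∘ₗ ρ g) = (m : ℝ) * ⟪ρ g w, w⟫_ℝ := by
    rw [Stmt14Aux.trace_eq_sum_inner' b]
    have hterm : ∀ j, ⟪(P ∘ₗ ρ g) (b j), b j⟫_ℝ
        = ∑ i, ⟪ρ g (b j), v i⟫_ℝ * ⟪v i, b j⟫_ℝ := by
      intro j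
      rw [LinearMap.comp_apply, hPformula, sum_inner]
      refine Finset.sum_congr rfl fun i _ => ?_
      rw [real_inner_smul_left]
    rw [Finset.sum_congr rfl (fun j _ => hterm j), Finset.sum_comm]
    have hcol : ∀ i, (∑ j, ⟪ρ g (b j), v i⟫_ℝ * ⟪v i, b j⟫_ℝ) = ⟪ρ g (v i), v i⟫_ℝ := by
      intro i
      have hvexp : ρ g (v i) = ∑ j, ⟪b j, v i⟫_ℝ • ρ g (b j) := by
        conv_lhs => rw [← b.sum_repr' (v i)]
        rw [map_sum]
        exact Finset.sum_congr rfl fun j _ => by rw [map_smul]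
      conv_rhs => rw [hvexp]
      rw [sum_inner]
      refine Finset.sum_congr rfl fun j _ => ?_
      rw [real_inner_smul_left, real_inner_comm (b j) (v i), mul_comm]
    rw [Finset.sum_congr rfl (fun i _ => hcol i),
      Finset.sum_congr rfl (fun i _ => hkey i), Finset.sum_const, Finset.card_univ,
      Fintype.card_fin, nsmul_eq_mul]
  -- numerator equals trace of P ∘ ρ g
  have hNval : (Nat.card ↥H : ℝ)⁻¹ * ∑ᶠ h : ↥H, LinearMap.trace ℝ S (ρ ((h : G) * g))
      = LinearMap.trace ℝ S (P ∘ₗ ρ g) := by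
    rw [finsum_eq_sum_of_fintype]
    have h1 : P ∘ₗ ρ g = (Nat.card ↥H : ℝ)⁻¹ • ∑ h : ↥H, ρ ((h : G) * g) := by
      apply LinearMap.ext
      intro u
      simp only [LinearMap.comp_apply, LinearMap.smul_apply, LinearMap.sum_apply]
      rw [hPapply]
      congr 1
      refine Finset.sum_congr rfl fun h _ => ?_
      exact (hρmul _ _ _).symm
    rw [h1, map_smul, map_sum, smul_eq_mul]
  -- the commutant and the averaging projection onto it
  let Cm : Submodule ℝ (S →ₗ[ℝ] S) :=
    { carrier := {d | ∀ x : G, d ∘ₗ ρ x = ρ x ∘ₗ d}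
      add_mem' := fun {a b} ha hb x => by
        rw [LinearMap.add_comp, LinearMap.comp_add, ha x, hb x]
      zero_mem' := fun x => by rw [LinearMap.zero_comp, LinearMap.comp_zero]
      smul_mem' := fun c a ha x => by
        rw [LinearMap.smul_comp, LinearMap.comp_smul, ha x] }
  have hmemCm : ∀ d : S →ₗ[ℝ] S, d ∈ Cm ↔ ∀ x : G, d ∘ₗ ρ x = ρ x ∘ₗ d :=
    fun d => Iff.rfl
  have hGcard : (0:ℝ) < (Nat.card G : ℝ) := by exact_mod_cast Nat.card_pos
  set Pi : (S →ₗ[ℝ] S) →ₗ[ℝ] (S →ₗ[ℝ] S) :=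
    (Nat.card G : ℝ)⁻¹ • ∑ x : G, Stmt14Aux.conjMap (ρ x) (ρ x⁻¹) with hPidef
  have hconjapply : ∀ (x : G) (f : S →ₗ[ℝ] S) (u : S),
      Stmt14Aux.conjMap (ρ x) (ρ x⁻¹) f u = ρ x (f (ρ x⁻¹ u)) := by
    intro x f u; rfl
  have hPiProj : LinearMap.IsProj Cm Pi := by
    constructor
    · -- maps into the commutant
      intro f
      rw [hmemCm]
      intro y
      apply LinearMap.ext
      intro u
      simp only [LinearMap.comp_apply, hPidef, LinearMap.smul_apply, LinearMap.sum_apply,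
        map_smul]
      congr 1
      rw [map_sum]
      refine (Fintype.sum_equiv (Equiv.mulLeft y) _ _ ?_).symm
      intro z
      rw [Equiv.coe_mulLeft, hconjapply, hconjapply, ← hρmul]
      congr 2
      rw [← hρmul]
      congr 1
      group
    · -- identity on the commutant
      intro f hf
      have h1 : ∀ x : G, Stmt14Aux.conjMap (ρ x) (ρ x⁻¹) f = f := by
        intro x
        apply LinearMap.ext
        intro u
        rw [hconjapply]
        have h2 := LinearMap.congr_fun ((hmemCm f).mp hf x⁻¹) u
        simp only [LinearMap.comp_apply] at h2
        rw [h2, hρinv]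
      rw [hPidef]
      simp only [LinearMap.smul_apply, LinearMap.sum_apply]
      rw [Finset.sum_congr rfl (fun x _ => h1 x), Finset.sum_const, Finset.card_univ,
        ← Nat.card_eq_fintype_card]
      rw [← Nat.cast_smul_eq_nsmul ℝ, smul_smul, inv_mul_cancel₀ (ne_of_gt hGcard), one_smul]
  -- trace of the projection is the dimension of the commutant
  have hσinv : ∀ x : G, LinearMap.trace ℝ S (ρ x⁻¹) = LinearMap.trace ℝ S (ρ x) := by
    intro x
    rw [Stmt14Aux.trace_eq_sum_inner' b, Stmt14Aux.trace_eq_sum_inner' b]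
    refine Finset.sum_congr rfl fun j _ => ?_
    rw [← hadj x, LinearMap.adjoint_inner_left, real_inner_comm]
  -- the commutant has dimension m
  let ev : ↥Cm →ₗ[ℝ] S :=
    { toFun := fun dd => dd.1 w
      map_add' := fun a bb => rfl
      map_smul' := fun c a => rfl }
  have hevinj : Function.Injective ev := by
    rw [← LinearMap.ker_eq_bot]
    rw [LinearMap.ker_eq_bot']
    intro dd hdd
    have hddw : dd.1 w = 0 := hdd
    by_cases hz : dd.1 = 0
    · exact Subtype.ext hz
    · exfalso
      have hKinv : ∀ x : G, ∀ u ∈ LinearMap.ker dd.1, ρ x u ∈ LinearMap.ker dd.1 := by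
        intro x u hu
        rw [LinearMap.mem_ker] at hu ⊢
        have h1 := LinearMap.congr_fun (dd.2 x) u
        simp only [LinearMap.comp_apply] at h1
        rw [h1, hu, map_zero]
      rcases hsimple _ hKinv with hbot | htop
      · have hwk : w ∈ LinearMap.ker dd.1 := LinearMap.mem_ker.mpr hddw
        rw [hbot] at hwk
        exact hw0 ((Submodule.mem_bot ℝ).mp hwk)
      · exact hz (LinearMap.ker_eq_top.mp htop)
  have hevrange : LinearMap.range ev = Fx := by
    apply le_antisymm
    · rintro z ⟨dd, rfl⟩
      rw [hmemFx]
      intro h hh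
      have h1 := LinearMap.congr_fun (dd.2 h) w
      simp only [LinearMap.comp_apply] at h1
      show ρ h (dd.1 w) = dd.1 w
      rw [← h1, hwfix h hh]
    · intro z hz
      obtain ⟨d, hdcm, hdw⟩ := hspan z ((hmemFx z).mp hz)
      exact ⟨⟨d, hdcm⟩, hdw.symm⟩
  have hfrk : Module.finrank ℝ ↥Cm = m := by
    have h1 : Module.finrank ℝ ↥(LinearMap.range ev) = Module.finrank ℝ ↥Cm :=
      LinearMap.finrank_range_of_inj hevinj
    rw [← h1, hevrange, hm]
  have hmpos : 0 < m := by
    have hnt2 : Nontrivial ↥Fx :=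
      nontrivial_of_ne (⟨w, hwFx⟩ : ↥Fx) 0 (by simp [Subtype.ext_iff, hw0])
    rw [hm]
    exact Module.finrank_pos
  -- the denominator equals m
  have hDval : (Nat.card G : ℝ)⁻¹ * ∑ᶠ x : G,
      LinearMap.trace ℝ S (ρ x) * LinearMap.trace ℝ S (ρ x) = (m : ℝ) := by
    rw [finsum_eq_sum_of_fintype]
    have h1 : LinearMap.trace ℝ (S →ₗ[ℝ] S) Pi = (m : ℝ) := by
      rw [hPiProj.trace, hfrk]
    rw [← h1, hPidef, map_smul, map_sum, smul_eq_mul]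
    congr 1
    refine Finset.sum_congr rfl fun x _ => ?_
    rw [Stmt14Aux.trace_conjMap, hσinv]
  rw [hNval, htrP, hDval]
  rw [mul_comm ((m : ℝ)) _, mul_div_assoc]
  have hmne : (m : ℝ) ≠ 0 := by exact_mod_cast Nat.pos_iff_ne_zero.mp hmpos
  rw [div_self hmne, mul_one]
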